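/- Let A₀ be a Noetherian regular local ring of dimension ≥ 1 with maximal ideal 𝔪₀, let α ∈ 𝔪₀ \ 𝔪₀², and let n ≥ 1. Then A₁ = A₀[t]/(t^n − α) is a regular local ring, the inclusion A₀ → A₁ is finite flat, and the length of A₁/𝔪₀A₁ as an A₁-module equals n. -/

import Mathlib

open Polynomial

/-- A Noetherian local ring is regular if its maximal ideal can be generated by
`k` elements where `k` equals the Krull dimension. -/
def IsRegularLocal (R : Type*) [CommRing R] [IsLocalRing R] : Prop :=
  IsNoetherianRing R ∧ ∃ (k : ℕ) (s : Fin k → R),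
    Ideal.span (Set.range s) = IsLocalRing.maximalIdeal R ∧ ringKrullDim R = k

section AuxDim
open IsLocalRing
variable {R S : Type*} [CommRing R] [CommRing S] [Algebra R S]

lemma lift_ltSeries [Algebra.IsIntegral R S] (hker : RingHom.ker (algebraMap R S) = ⊥)
    (p : LTSeries (PrimeSpectrum R)) :
    ∃ q : LTSeries (PrimeSpectrum S), q.length = p.length ∧
      q.last.asIdeal.comap (algebraMap R S) = p.last.asIdeal := by
  obtain ⟨m, hL⟩ : ∃ m, p.length = m := ⟨_, rfl⟩
  induction m generalizing p with
  | zero =>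
    haveI := p.last.isPrime
    obtain ⟨Q, -, hQp, hQc⟩ := Ideal.exists_ideal_over_prime_of_isIntegral p.last.asIdeal ⊥
      (by rw [← RingHom.ker_eq_comap_bot (algebraMap R S), hker]; exact bot_le)
    exact ⟨RelSeries.singleton _ ⟨Q, hQp⟩, by simpa using hL.symm, hQc⟩
  | succ m ih =>
    obtain ⟨q, hq, hqc⟩ := ih p.eraseLast (by simp [RelSeries.eraseLast, hL])
    have hlt : p.eraseLast.last < p.last := by
      apply p.eraseLast_last_rel_last
      omega
    haveI := p.last.isPrime
    obtain ⟨Q, hge, hQp, hQc⟩ := Ideal.exists_ideal_over_prime_of_isIntegral p.last.asIdeal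
      q.last.asIdeal (by rw [hqc]; exact le_of_lt hlt)
    have hne : q.last.asIdeal ≠ Q := by
      rintro rfl
      exact (ne_of_lt hlt) (PrimeSpectrum.ext (by rw [← hqc, hQc]))
    refine ⟨q.snoc ⟨Q, hQp⟩ ((PrimeSpectrum.asIdeal_lt_asIdeal _ _).mp (lt_of_le_of_ne hge hne)),
      by simp [hq]; omega, by simp [hQc]⟩

lemma ringKrullDim_eq_of_integral [Algebra.IsIntegral R S] [Nontrivial R] [Nontrivial S]
    (hker : RingHom.ker (algebraMap R S) = ⊥) :
    ringKrullDim S = ringKrullDim R := by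
  apply le_antisymm
  · show Order.krullDim (PrimeSpectrum S) ≤ Order.krullDim (PrimeSpectrum R)
    apply Order.krullDim_le_of_strictMono (PrimeSpectrum.comap (algebraMap R S))
    intro P Q hPQ
    obtain ⟨x, hxQ, hxP⟩ := SetLike.exists_of_lt ((PrimeSpectrum.asIdeal_lt_asIdeal _ _).mpr hPQ)
    haveI := P.isPrime
    exact (PrimeSpectrum.asIdeal_lt_asIdeal _ _).mp
      (Ideal.comap_lt_comap_of_integral_mem_sdiff (le_of_lt hPQ) ⟨hxQ, hxP⟩
        (Algebra.IsIntegral.isIntegral x))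
  · rw [ringKrullDim, ringKrullDim, Order.krullDim_eq_iSup_length, Order.krullDim_eq_iSup_length]
    rw [WithBot.coe_le_coe]
    apply iSup_le
    intro p
    obtain ⟨q, hq, -⟩ := lift_ltSeries hker p
    exact le_iSup_of_le q (by rw [hq])

end AuxDim

namespace Aux
set_option linter.unusedSectionVars false
open IsLocalRing

variable {A₀ : Type*} [CommRing A₀] [IsLocalRing A₀]

local notation "𝔪₀" => maximalIdeal A₀


lemma hmonic (α : A₀) (n : ℕ) (hn : 1 ≤ n) : ((X : A₀[X]) ^ n - C α).Monic :=
  monic_X_pow_sub_C α (by omega)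

noncomputable def pb (α : A₀) (n : ℕ) (hn : 1 ≤ n) :
    PowerBasis A₀ (AdjoinRoot ((X : A₀[X]) ^ n - C α)) :=
  AdjoinRoot.powerBasis' (hmonic α n hn)

lemma pb_dim (α : A₀) (n : ℕ) (hn : 1 ≤ n) : (pb α n hn).dim = n := by
  simp only [pb, AdjoinRoot.powerBasis'_dim]
  exact natDegree_X_pow_sub_C

lemma pb_gen (α : A₀) (n : ℕ) (hn : 1 ≤ n) : (pb α n hn).gen = AdjoinRoot.root _ := rfl

lemma root_pow (α : A₀) (n : ℕ) :
    (AdjoinRoot.root ((X : A₀[X]) ^ n - C α)) ^ n = algebraMap A₀ _ α := by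
  have h := AdjoinRoot.mk_self (f := (X : A₀[X]) ^ n - C α)
  rw [map_sub, map_pow, AdjoinRoot.mk_X, AdjoinRoot.mk_C, sub_eq_zero] at h
  rw [h, AdjoinRoot.algebraMap_eq]

/-- coordinate functional of the `i`-th basis vector -/
noncomputable def coord (α : A₀) (n : ℕ) (hn : 1 ≤ n) (i : Fin n) :
    AdjoinRoot ((X : A₀[X]) ^ n - C α) →ₗ[A₀] A₀ :=
  (pb α n hn).basis.coord (Fin.cast (pb_dim α n hn).symm i)

lemma coord_root_pow_self (α : A₀) (n : ℕ) (hn : 1 ≤ n) (i : Fin n) :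
    coord α n hn i (AdjoinRoot.root _ ^ (i : ℕ)) = 1 := by
  have hb : (pb α n hn).basis (Fin.cast (pb_dim α n hn).symm i)
      = AdjoinRoot.root _ ^ (i : ℕ) := by
    rw [PowerBasis.basis_eq_pow]; rfl
  rw [coord, ← hb, Module.Basis.coord_apply, Module.Basis.repr_self, Finsupp.single_apply, if_pos rfl]

lemma coord_root_pow_mem (α : A₀) (n : ℕ) (hn : 1 ≤ n) (hα : α ∈ 𝔪₀)
    (i : Fin n) (m : ℕ) (hm : (i : ℕ) ≠ m ∨ n ≤ m) :
    coord α n hn i (AdjoinRoot.root _ ^ m) ∈ 𝔪₀ := by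
  rcases lt_or_ge m n with hmn | hmn
  · rcases hm with hm | hm
    · have hb : (pb α n hn).basis (Fin.cast (pb_dim α n hn).symm ⟨m, hmn⟩)
          = AdjoinRoot.root _ ^ m := by
        rw [PowerBasis.basis_eq_pow]; rfl
      rw [coord, ← hb, Module.Basis.coord_apply, Module.Basis.repr_self, Finsupp.single_apply]
      rw [if_neg]
      · exact zero_mem _
      · intro h
        apply hm
        have := congrArg (Fin.cast (pb_dim α n hn)) h
        simp only [Fin.cast_cast, Fin.cast_eq_self] at this
        exact (congrArg Fin.val this).symm
    · omega
  · have : (AdjoinRoot.root ((X : A₀[X]) ^ n - C α)) ^ m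
        = α • (AdjoinRoot.root _ ^ (m - n)) := by
      rw [Algebra.smul_def, ← root_pow α n, ← pow_add]
      congr 1; omega
    rw [this, map_smul, smul_eq_mul]
    exact Ideal.mul_mem_right _ _ hα

/-- any element of `𝔪₀·B + (root^(i+1))` has `i`-th coordinate in `𝔪₀` -/
lemma coord_mem_of_mem (α : A₀) (n : ℕ) (hn : 1 ≤ n) (hα : α ∈ 𝔪₀)
    (i : Fin n) {x : AdjoinRoot ((X : A₀[X]) ^ n - C α)}
    (hx : x ∈ Ideal.map (algebraMap A₀ _) 𝔪₀ ⊔ Ideal.span {AdjoinRoot.root _ ^ ((i : ℕ) + 1)}) :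
    coord α n hn i x ∈ 𝔪₀ := by
  obtain ⟨j, hj, s, hs, rfl⟩ := Submodule.mem_sup.mp hx
  rw [map_add]
  refine add_mem ?_ ?_
  · have hj' : j ∈ (𝔪₀ • ⊤ : Submodule A₀ (AdjoinRoot ((X : A₀[X]) ^ n - C α))) := by
      rw [Ideal.smul_top_eq_map]; exact hj
    refine Submodule.smul_induction_on hj' (fun r hr x _ => ?_) (fun x y hx hy => ?_)
    · rw [map_smul, smul_eq_mul]; exact Ideal.mul_mem_right _ _ hr
    · rw [map_add]; exact add_mem hx hy
  · obtain ⟨b, rfl⟩ := Ideal.mem_span_singleton'.mp hs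
    have hb := (pb α n hn).basis.sum_repr b
    rw [← hb, Finset.sum_mul, map_sum]
    refine Submodule.sum_mem _ fun j _ => ?_
    rw [smul_mul_assoc, map_smul, smul_eq_mul]
    refine Ideal.mul_mem_left _ _ ?_
    rw [PowerBasis.basis_eq_pow, pb_gen, ← pow_add]
    exact coord_root_pow_mem α n hn hα i _ (by omega)

lemma root_pow_not_mem (α : A₀) (n : ℕ) (hn : 1 ≤ n) (hα : α ∈ 𝔪₀) (i : Fin n) :
    AdjoinRoot.root ((X : A₀[X]) ^ n - C α) ^ (i : ℕ) ∉
      Ideal.map (algebraMap A₀ _) 𝔪₀ ⊔ Ideal.span {AdjoinRoot.root _ ^ ((i : ℕ) + 1)} := by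
  intro hmem
  have h1 := coord_mem_of_mem α n hn hα i hmem
  rw [coord_root_pow_self] at h1
  exact (Ideal.ne_top_iff_one _).mp (Ideal.IsMaximal.ne_top inferInstance) h1


-- pretend previous results
/-- the candidate maximal ideal -/
noncomputable def MM (α : A₀) (n : ℕ) : Ideal (AdjoinRoot ((X : A₀[X]) ^ n - C α)) :=
  Ideal.map (algebraMap A₀ _) 𝔪₀ ⊔ Ideal.span {AdjoinRoot.root _}

noncomputable def φ (α : A₀) (n : ℕ) (hα : α ∈ 𝔪₀) (hn : 1 ≤ n) :
    AdjoinRoot ((X : A₀[X]) ^ n - C α) →+* ResidueField A₀ :=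
  AdjoinRoot.lift (residue A₀) 0 (by
    rw [eval₂_sub, eval₂_pow, eval₂_X, eval₂_C, zero_pow (by omega : n ≠ 0), zero_sub,
      neg_eq_zero]
    exact Ideal.Quotient.eq_zero_iff_mem.mpr hα)

lemma φ_surjective (α : A₀) (n : ℕ) (hα : α ∈ 𝔪₀) (hn : 1 ≤ n) :
    Function.Surjective (φ α n hα hn) := by
  intro y
  obtain ⟨a, rfl⟩ := Ideal.Quotient.mk_surjective y
  exact ⟨AdjoinRoot.of _ a, AdjoinRoot.lift_of _⟩

lemma ker_φ (α : A₀) (n : ℕ) (hα : α ∈ 𝔪₀) (hn : 1 ≤ n) :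
    RingHom.ker (φ α n hα hn) = MM α n := by
  apply le_antisymm
  · intro x hx
    obtain ⟨p, rfl⟩ := AdjoinRoot.mk_surjective x
    rw [RingHom.mem_ker, φ, AdjoinRoot.lift_mk, eval₂_at_zero] at hx
    replace hx : p.coeff 0 ∈ 𝔪₀ := Ideal.Quotient.eq_zero_iff_mem.mp hx
    have hp : AdjoinRoot.mk ((X : A₀[X]) ^ n - C α) p
        = AdjoinRoot.root ((X : A₀[X]) ^ n - C α) * AdjoinRoot.mk _ p.divX
          + algebraMap A₀ (AdjoinRoot ((X : A₀[X]) ^ n - C α)) (p.coeff 0) := by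
      conv_lhs => rw [← X_mul_divX_add p]
      rw [map_add, map_mul, AdjoinRoot.mk_X, AdjoinRoot.mk_C, AdjoinRoot.algebraMap_eq]
    rw [hp]
    refine add_mem (Ideal.mem_sup_right ?_) (Ideal.mem_sup_left ?_)
    · exact Ideal.mul_mem_right _ _ (Ideal.subset_span rfl)
    · exact Ideal.mem_map_of_mem _ hx
  · rw [MM]
    refine sup_le ?_ ?_
    · rw [Ideal.map_le_iff_le_comap]
      intro a ha
      rw [Ideal.mem_comap, RingHom.mem_ker, φ, AdjoinRoot.algebraMap_eq, AdjoinRoot.lift_of]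
      exact Ideal.Quotient.eq_zero_iff_mem.mpr ha
    · rw [Ideal.span_le, Set.singleton_subset_iff]
      show φ α n hα hn (AdjoinRoot.root _) = 0
      rw [φ, AdjoinRoot.lift_root]

lemma MM_isMaximal (α : A₀) (n : ℕ) (hα : α ∈ 𝔪₀) (hn : 1 ≤ n) : (MM α n).IsMaximal := by
  rw [← ker_φ α n hα hn]
  exact RingHom.ker_isMaximal_of_surjective _ (φ_surjective α n hα hn)

lemma isLocal (α : A₀) (n : ℕ) (hα : α ∈ 𝔪₀) (hn : 1 ≤ n)
    [Algebra.IsIntegral A₀ (AdjoinRoot ((X : A₀[X]) ^ n - C α))] :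
    IsLocalRing (AdjoinRoot ((X : A₀[X]) ^ n - C α)) := by
  apply IsLocalRing.of_unique_max_ideal
  refine ⟨MM α n, MM_isMaximal α n hα hn, fun J hJ => ?_⟩
  haveI : J.IsMaximal := hJ
  have hcomap : Ideal.comap (algebraMap A₀ _) J = 𝔪₀ :=
    (IsLocalRing.eq_maximalIdeal (Ideal.isMaximal_comap_of_isIntegral_of_isMaximal J))
  have hle : MM α n ≤ J := by
    refine sup_le ?_ ?_
    · rw [Ideal.map_le_iff_le_comap, hcomap]
    · rw [Ideal.span_le, Set.singleton_subset_iff]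
      have hroot : (AdjoinRoot.root ((X : A₀[X]) ^ n - C α)) ^ n ∈ J := by
        rw [root_pow α n]
        rw [← Ideal.mem_comap, hcomap]
        exact hα
      exact hJ.isPrime.mem_of_pow_mem n hroot
  exact ((MM_isMaximal α n hα hn).eq_of_le hJ.ne_top hle).symm


/-- swap a generator for α -/
lemma exists_update_span {k : ℕ} (s : Fin k → A₀) (hs : Ideal.span (Set.range s) = 𝔪₀)
    {α : A₀} (hα : α ∈ 𝔪₀) (hα2 : α ∉ 𝔪₀ ^ 2) :
    ∃ i : Fin k, Ideal.span (Set.range (Function.update s i α)) = 𝔪₀ := by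
  have hsmem : ∀ j, s j ∈ 𝔪₀ := fun j => hs ▸ Ideal.subset_span ⟨j, rfl⟩
  obtain ⟨c, hc⟩ := Submodule.mem_span_range_iff_exists_fun A₀ |>.mp (hs ▸ hα)
  have hexists : ∃ i, c i ∉ 𝔪₀ := by
    by_contra hcall
    push_neg at hcall
    apply hα2
    rw [pow_two, ← hc]
    exact Submodule.sum_mem _ fun j _ => by
      rw [smul_eq_mul]; exact Ideal.mul_mem_mul (hcall j) (hsmem j)
  obtain ⟨i, hci⟩ := hexists
  have hunit : IsUnit (c i) := by
    by_contra h
    exact hci (h : c i ∈ nonunits A₀)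
  refine ⟨i, le_antisymm ?_ ?_⟩
  · rw [Ideal.span_le]
    rintro x ⟨j, rfl⟩
    rcases eq_or_ne j i with rfl | hji
    · rwa [Function.update_self]
    · rw [Function.update_of_ne hji]; exact hsmem j
  · rw [← hs, Ideal.span_le]
    rintro x ⟨j, rfl⟩
    have hαmem : α ∈ Ideal.span (Set.range (Function.update s i α)) :=
      Ideal.subset_span ⟨i, Function.update_self i α s⟩
    have hother : ∀ j', j' ≠ i → s j' ∈ Ideal.span (Set.range (Function.update s i α)) :=
      fun j' hj' => Ideal.subset_span ⟨j', Function.update_of_ne hj' α s⟩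
    rcases eq_or_ne j i with rfl | hji
    · -- express s j using α and the others
      obtain ⟨u, hu⟩ := hunit
      have key : c j • s j = α - ∑ j' ∈ Finset.univ.erase j, c j' • s j' := by
        rw [eq_sub_iff_add_eq, ← hc]
        exact Finset.add_sum_erase Finset.univ (fun j0 => c j0 • s j0) (Finset.mem_univ j)
      have : s j = (↑u⁻¹ : A₀) • (c j • s j) := by
        rw [smul_smul, ← hu, Units.inv_mul, one_smul]
      rw [this, key]
      refine Submodule.smul_mem _ _ (sub_mem hαmem (Submodule.sum_mem _ fun j' hj' => ?_))
      exact Submodule.smul_mem _ _ (hother j' (Finset.ne_of_mem_erase hj'))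
    · exact hother j hji


lemma exists_cs (α : A₀) (n : ℕ) (hn : 1 ≤ n) (hα : α ∈ 𝔪₀)
    [hL : IsLocalRing (AdjoinRoot ((X : A₀[X]) ^ n - C α))]
    (hmax : maximalIdeal (AdjoinRoot ((X : A₀[X]) ^ n - C α)) = MM α n) :
    ∃ c : CompositionSeries
        (Submodule (AdjoinRoot ((X : A₀[X]) ^ n - C α))
          ((AdjoinRoot ((X : A₀[X]) ^ n - C α)) ⧸
            Ideal.map (algebraMap A₀ (AdjoinRoot ((X : A₀[X]) ^ n - C α))) 𝔪₀)),
      c.head = ⊥ ∧ c.last = ⊤ ∧ c.length = n := by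
  set B := AdjoinRoot ((X : A₀[X]) ^ n - C α) with hB
  set J : Ideal B := Ideal.map (algebraMap A₀ B) 𝔪₀ with hJ
  set t : B := AdjoinRoot.root _ with ht
  set π : B →+* B ⧸ J := Ideal.Quotient.mk J with hπ
  have hsmul : ∀ (b x : B), b • (π x) = π (b * x) := fun b x => rfl
  set N : ℕ → Submodule B (B ⧸ J) := fun i => Submodule.span B {π (t ^ i)} with hN
  have hN0 : N 0 = ⊤ := by
    rw [Submodule.eq_top_iff']
    intro x
    obtain ⟨b, rfl⟩ := Ideal.Quotient.mk_surjective x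
    have : π b = b • π (t ^ 0) := by rw [hsmul, pow_zero, mul_one]
    rw [show (Ideal.Quotient.mk J) b = π b from rfl, this]
    exact Submodule.smul_mem _ _ (Submodule.subset_span rfl)
  have hNn : N n = ⊥ := by
    have : π (t ^ n) = 0 := by
      rw [ht, root_pow α n, Ideal.Quotient.eq_zero_iff_mem]
      exact Ideal.mem_map_of_mem _ hα
    show Submodule.span B {π (t ^ n)} = ⊥
    rw [this]
    exact Submodule.span_zero_singleton B
  have hmono : ∀ i : ℕ, N (i + 1) ≤ N i := by
    intro i
    show Submodule.span B {π (t ^ (i+1))} ≤ N i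
    rw [Submodule.span_le, Set.singleton_subset_iff]
    have : π (t ^ (i + 1)) = t • π (t ^ i) := by rw [hsmul, ← pow_succ']
    rw [this]
    exact Submodule.smul_mem _ _ (Submodule.subset_span rfl)
  have hkey : ∀ i : ℕ, i < n → π (t ^ i) ∉ N (i + 1) := by
    intro i hi hmem
    obtain ⟨b, hb⟩ := Submodule.mem_span_singleton.mp hmem
    rw [hsmul] at hb
    have : t ^ i - b * t ^ (i + 1) ∈ J := by
      rw [← Ideal.Quotient.eq_zero_iff_mem, map_sub, sub_eq_zero]
      exact hb.symm
    apply root_pow_not_mem α n hn hα ⟨i, hi⟩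
    show t ^ i ∈ J ⊔ Ideal.span {t ^ (i + 1)}
    have hdecomp : t ^ i = (t ^ i - b * t ^ (i + 1)) + b * t ^ (i + 1) := by ring
    rw [hdecomp]
    exact add_mem (Ideal.mem_sup_left this)
      (Ideal.mem_sup_right (Ideal.mem_span_singleton'.mpr ⟨b, rfl⟩))
  have hcov : ∀ i : ℕ, i < n → N (i + 1) ⋖ N i := by
    intro i hi
    constructor
    · exact lt_of_le_of_ne (hmono i) fun h =>
        hkey i hi (h ▸ Submodule.subset_span rfl)
    · intro K hK1 hK2
      obtain ⟨y, hyK, hyN⟩ := SetLike.exists_of_lt hK1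
      have hyNi : y ∈ N i := le_of_lt hK2 hyK
      obtain ⟨a, ha⟩ := Submodule.mem_span_singleton.mp hyNi
      have haunit : IsUnit a := by
        by_contra hna
        apply hyN
        have haM : a ∈ MM α n := hmax ▸ (hna : a ∈ nonunits B)
        obtain ⟨m, hm, s, hs, rfl⟩ := Submodule.mem_sup.mp haM
        obtain ⟨b, rfl⟩ := Ideal.mem_span_singleton'.mp hs
        rw [← ha, add_smul, hsmul]
        refine add_mem ?_ ?_
        · have : π ((m : B) * t ^ i) = 0 :=
            Ideal.Quotient.eq_zero_iff_mem.mpr (Ideal.mul_mem_right _ _ hm)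
          rw [this]; exact zero_mem _
        · have : (b * t) • π (t ^ i) = b • π (t ^ (i + 1)) := by
            rw [hsmul, hsmul, mul_assoc, ← pow_succ']
          rw [this]
          exact Submodule.smul_mem _ _ (Submodule.subset_span rfl)
      have hmemK : π (t ^ i) ∈ K := by
        obtain ⟨u, hu⟩ := haunit
        have : π (t ^ i) = (↑u⁻¹ : B) • y := by
          rw [← ha, ← hu, smul_smul, Units.inv_mul, one_smul]
        rw [this]
        exact Submodule.smul_mem _ _ hyK
      have hNiK : N i ≤ K := by
        show Submodule.span B {π (t ^ i)} ≤ K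
        rw [Submodule.span_le, Set.singleton_subset_iff]
        exact hmemK
      exact absurd hNiK hK2.not_ge
  refine ⟨⟨n, fun i => N (n - (i : ℕ)), fun i => ?_⟩, ?_, ?_, rfl⟩
  · show N (n - (i.castSucc : ℕ)) ⋖ N (n - (i.succ : ℕ))
    have hi : (i : ℕ) < n := i.isLt
    simp only [Fin.coe_castSucc, Fin.val_succ]
    have e : n - (i : ℕ) = (n - ((i : ℕ) + 1)) + 1 := by omega
    rw [e]
    exact hcov _ (by omega)
  · show N (n - ((0 : Fin (n+1)) : ℕ)) = ⊥
    simpa using hNn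
  · show N (n - ((Fin.last n : Fin (n+1)) : ℕ)) = ⊤
    simpa using hN0


lemma span_gens_eq_MM (α : A₀) (n : ℕ) (hn : 1 ≤ n) {k : ℕ} (i : Fin k) (s' : Fin k → A₀)
    (hs' : Ideal.span (Set.range s') = 𝔪₀) (hsi : s' i = α) :
    Ideal.span (Set.range fun j => if j = i then AdjoinRoot.root ((X : A₀[X]) ^ n - C α)
      else algebraMap A₀ _ (s' j)) = MM α n := by
  set B := AdjoinRoot ((X : A₀[X]) ^ n - C α)
  set t : B := AdjoinRoot.root _ with ht
  set u : Fin k → B := fun j => if j = i then t else algebraMap A₀ B (s' j) with hu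
  have hsmem : ∀ j, s' j ∈ 𝔪₀ := fun j => hs' ▸ Ideal.subset_span ⟨j, rfl⟩
  have htmem : t ∈ Ideal.span (Set.range u) :=
    Ideal.subset_span ⟨i, by simp [hu]⟩
  apply le_antisymm
  · rw [Ideal.span_le]
    rintro x ⟨j, rfl⟩
    rcases eq_or_ne j i with rfl | hji
    · simp only [hu, if_pos rfl]
      exact Ideal.mem_sup_right (Ideal.subset_span rfl)
    · simp only [hu, if_neg hji]
      exact Ideal.mem_sup_left (Ideal.mem_map_of_mem _ (hsmem j))
  · refine sup_le ?_ ?_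
    · rw [← hs', Ideal.map_span, Ideal.span_le]
      rintro x ⟨y, ⟨j, rfl⟩, rfl⟩
      rcases eq_or_ne j i with rfl | hji
      · show algebraMap A₀ B (s' j) ∈ _
        rw [hsi, ← root_pow α n]
        exact Ideal.pow_mem_of_mem _ htmem n (by omega)
      · show algebraMap A₀ B (s' j) ∈ _
        have : algebraMap A₀ B (s' j) = u j := by simp [hu, if_neg hji]
        rw [this]
        exact Ideal.subset_span ⟨j, rfl⟩
    · rw [Ideal.span_le, Set.singleton_subset_iff]
      exact htmem

lemma algebraMap_ker (α : A₀) (n : ℕ) (hn : 1 ≤ n) :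
    RingHom.ker (algebraMap A₀ (AdjoinRoot ((X : A₀[X]) ^ n - C α))) = ⊥ := by
  rw [eq_bot_iff]
  intro a ha
  rw [RingHom.mem_ker] at ha
  -- use the coordinate of index 0
  set pb0 : PowerBasis A₀ (AdjoinRoot ((X : A₀[X]) ^ n - C α)) :=
    AdjoinRoot.powerBasis' (monic_X_pow_sub_C α (by omega : n ≠ 0)) with hpb
  have hdim : pb0.dim = n := by
    simp only [hpb, AdjoinRoot.powerBasis'_dim]
    exact natDegree_X_pow_sub_C
  have h0 : (0 : ℕ) < pb0.dim := by omega
  have hone : pb0.basis ⟨0, h0⟩ = 1 := by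
    rw [PowerBasis.basis_eq_pow]; exact pow_zero _
  have := congrArg (pb0.basis.coord ⟨0, h0⟩) ha
  rw [Algebra.algebraMap_eq_smul_one, map_smul, ← hone, Module.Basis.coord_apply,
    Module.Basis.repr_self, map_zero] at this
  simpa using this

end Aux

/-- Let `A₀` be a Noetherian regular local ring of dimension ≥ 1,
`α ∈ 𝔪₀ \ 𝔪₀²`, and `n ≥ 1`.  Then `A₁ = A₀[t]/(tⁿ − α)` is a regular local
ring, `A₀ → A₁` is finite flat, and the length of `A₁/𝔪₀A₁` as an `A₁`-module
equals `n` (there is a composition series from `⊥` to `⊤` of length `n`). -/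
theorem adjoin_root_of_unramified_parameter
    (A₀ : Type*) [CommRing A₀] [IsLocalRing A₀] [IsNoetherianRing A₀]
    (hreg : IsRegularLocal A₀) (hdim : 1 ≤ ringKrullDim A₀)
    (α : A₀) (hα : α ∈ IsLocalRing.maximalIdeal A₀)
    (hα2 : α ∉ (IsLocalRing.maximalIdeal A₀) ^ 2)
    (n : ℕ) (hn : 1 ≤ n) :
    letI A₁ := Polynomial A₀ ⧸ Ideal.span {(X : Polynomial A₀) ^ n - C α}
    ∃ hloc : IsLocalRing A₁,
      (letI := hloc; IsRegularLocal A₁) ∧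
      Module.Finite A₀ A₁ ∧ Module.Flat A₀ A₁ ∧
      ∃ c : CompositionSeries
          (Submodule A₁ (A₁ ⧸ Ideal.map (algebraMap A₀ A₁)
            (IsLocalRing.maximalIdeal A₀))),
        c.head = ⊥ ∧ c.last = ⊤ ∧ c.length = n := by
  classical
  obtain ⟨-, k, s, hs, hdimk⟩ := hreg
  haveI hfin : Module.Finite A₀ (AdjoinRoot ((X : A₀[X]) ^ n - C α)) :=
    Module.Finite.of_basis (Aux.pb α n hn).basis
  haveI hfree : Module.Free A₀ (AdjoinRoot ((X : A₀[X]) ^ n - C α)) :=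
    Module.Free.of_basis (Aux.pb α n hn).basis
  haveI hint : Algebra.IsIntegral A₀ (AdjoinRoot ((X : A₀[X]) ^ n - C α)) :=
    Algebra.IsIntegral.of_finite _ _
  haveI hloc : IsLocalRing (AdjoinRoot ((X : A₀[X]) ^ n - C α)) :=
    Aux.isLocal α n hα hn
  have hmax : IsLocalRing.maximalIdeal (AdjoinRoot ((X : A₀[X]) ^ n - C α)) = Aux.MM α n :=
    (IsLocalRing.eq_maximalIdeal (Aux.MM_isMaximal α n hα hn)).symm
  have hdimB : ringKrullDim (AdjoinRoot ((X : A₀[X]) ^ n - C α)) = ringKrullDim A₀ :=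
    ringKrullDim_eq_of_integral (Aux.algebraMap_ker α n hn)
  obtain ⟨i, hupd⟩ := Aux.exists_update_span s hs hα hα2
  have hgens := Aux.span_gens_eq_MM α n hn i (Function.update s i α) hupd
    (Function.update_self i α s)
  haveI hflat : Module.Flat A₀ (AdjoinRoot ((X : A₀[X]) ^ n - C α)) := inferInstance
  haveI hnoeth : IsNoetherianRing (AdjoinRoot ((X : A₀[X]) ^ n - C α)) := inferInstance
  refine ⟨hloc, ⟨hnoeth, k, _, hgens.trans hmax.symm, hdimB.trans hdimk⟩,
    hfin, hflat, Aux.exists_cs α n hn hα hmax⟩
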